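/- Let 𝒜 be a closed set of impartial games that is nonempty and contains at least one game with an option (i.e. 𝒜 ≠ ∅ and 𝒜 is not just the zero game). Then for every G ∈ 𝒜 there exists H ∈ 𝒜 such that G + H is a misère P-position. -/

import Mathlib

universe u

namespace SetTheory

/-- Pre-games (removed from Mathlib; restated with the December 2024 Mathlib definition). -/
inductive PGame : Type (u + 1)
  | mk : ∀ α β : Type u, (α → PGame) → (β → PGame) → PGame

namespace PGame

/-- The type of left moves. -/
def LeftMoves : PGame.{u} → Type u
  | mk l _ _ _ => l

/-- The type of right moves. -/
def RightMoves : PGame.{u} → Type u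
  | mk _ r _ _ => r

/-- The game after a left move. -/
def moveLeft : ∀ g : PGame.{u}, LeftMoves g → PGame.{u}
  | mk _ _ L _ => L

/-- The game after a right move. -/
def moveRight : ∀ g : PGame.{u}, RightMoves g → PGame.{u}
  | mk _ _ _ R => R

/-- The pair (`x ≤ y`, `x ⧏ y`), defined by simultaneous recursion. -/
noncomputable def leLF (x : PGame.{u}) : PGame.{u} → Prop × Prop :=
  PGame.rec (motive := fun _ => PGame.{u} → Prop × Prop)
    (fun _ _ _ _ IHxl IHxr y =>
      PGame.rec (motive := fun _ => Prop × Prop)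
        (fun yl yr yL yR IHyl IHyr =>
          ((∀ i, (IHxl i (mk yl yr yL yR)).2) ∧ ∀ j, (IHyr j).2,
            (∃ i, (IHyl i).1) ∨ ∃ j, (IHxr j (mk yl yr yL yR)).1)) y) x

/-- The less-or-equal relation on pre-games. -/
noncomputable instance : LE PGame.{u} :=
  ⟨fun x y => (leLF x y).1⟩

/-- Equivalence of pre-games. -/
def Equiv (x y : PGame.{u}) : Prop :=
  x ≤ y ∧ y ≤ x

instance : HasEquiv PGame.{u} :=
  ⟨Equiv⟩

/-- Negation of pre-games. -/
def neg : PGame.{u} → PGame.{u}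
  | mk l r L R => mk r l (fun j => neg (R j)) (fun i => neg (L i))

instance : Neg PGame.{u} :=
  ⟨neg⟩

/-- Disjunctive sum of pre-games. -/
noncomputable def add (x : PGame.{u}) : PGame.{u} → PGame.{u} :=
  PGame.rec (motive := fun _ => PGame.{u} → PGame.{u})
    (fun xl xr _ _ IHxl IHxr y =>
      PGame.rec (motive := fun _ => PGame.{u})
        (fun yl yr yL yR IHyl IHyr =>
          mk (xl ⊕ yl) (xr ⊕ yr)
            (Sum.rec (fun i => IHxl i (mk yl yr yL yR)) IHyl)
            (Sum.rec (fun i => IHxr i (mk yl yr yL yR)) IHyr)) y) x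

noncomputable instance : Add PGame.{u} :=
  ⟨add⟩

/-- The definition for an impartial game. -/
def ImpartialAux : PGame.{u} → Prop
  | mk l r L R => (mk l r L R ≈ -mk l r L R) ∧ (∀ i, ImpartialAux (L i)) ∧ ∀ j, ImpartialAux (R j)

/-- A typeclass on impartial games. -/
class Impartial (G : PGame.{u}) : Prop where
  out : ImpartialAux G

end PGame

end SetTheory

open SetTheory PGame

/-- `G` is a misère P-position: `G` has at least one option and every option of `G` is a
misère N-position (i.e. not a misère P-position).  In particular the empty game `0` is a
misère N-position.  (For an impartial game the options are the left moves.) -/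
def MisereP : PGame → Prop
  | PGame.mk l _ L _ => Nonempty l ∧ ∀ i, ¬ MisereP (L i)

/-- A set of games is *closed* if it is closed under disjunctive sum and hereditarily
closed (every option of a member again belongs to the set). -/
def IsClosedFamily (A : Set PGame) : Prop :=
  (∀ G ∈ A, ∀ H ∈ A, G + H ∈ A) ∧
  (∀ G ∈ A, ∀ i : G.LeftMoves, G.moveLeft i ∈ A) ∧
  (∀ G ∈ A, ∀ j : G.RightMoves, G.moveRight j ∈ A)

namespace SetTheory

namespace PGame

/-- Left moves of a sum. -/
def toLeftMovesAdd {x y : PGame.{u}} : x.LeftMoves ⊕ y.LeftMoves ≃ (x + y).LeftMoves := by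
  cases x
  cases y
  exact Equiv.refl _

theorem add_moveLeft_inl {x : PGame.{u}} (y : PGame.{u}) (i : x.LeftMoves) :
    (x + y).moveLeft (toLeftMovesAdd (Sum.inl i)) = x.moveLeft i + y := by
  cases x
  cases y
  rfl

theorem add_moveLeft_inr (x : PGame.{u}) {y : PGame.{u}} (i : y.LeftMoves) :
    (x + y).moveLeft (toLeftMovesAdd (Sum.inr i)) = x + y.moveLeft i := by
  cases x
  cases y
  rfl

/-- Relabellings. -/
inductive Relabelling : PGame.{u} → PGame.{u} → Type (u + 1)
  | mk : ∀ {x y : PGame.{u}} (L : x.LeftMoves ≃ y.LeftMoves) (R : x.RightMoves ≃ y.RightMoves),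
      (∀ i, Relabelling (x.moveLeft i) (y.moveLeft (L i))) →
      (∀ j, Relabelling (x.moveRight (R.symm j)) (y.moveRight j)) → Relabelling x y

noncomputable def addCommRelabelling (x y : PGame.{u}) : Relabelling (x + y) (y + x) := by
  induction x generalizing y with
  | mk xl xr xL xR ihxl ihxr =>
    induction y with
    | mk yl yr yL yR ihyl ihyr =>
      refine Relabelling.mk (Equiv.sumComm _ _) (Equiv.sumComm _ _) ?_ ?_
      · rintro (i | j)
        · exact ihxl i _
        · exact ihyl j
      · rintro (j | i)
        · exact ihyr j
        · exact ihxr i _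

/-- Immediate options. -/
inductive IsOption : PGame.{u} → PGame.{u} → Prop
  | moveLeft {x : PGame.{u}} (i : x.LeftMoves) : IsOption (x.moveLeft i) x

theorem isOption_wf : WellFounded (@IsOption.{u}) := by
  constructor
  intro x
  induction x with
  | mk l r L R ih =>
    constructor
    intro y h
    cases h with
    | moveLeft i => exact ih i

instance : WellFoundedRelation PGame.{u} := ⟨IsOption, isOption_wf⟩

theorem Subsequent.moveLeft (x : PGame.{u}) {i : x.LeftMoves} : IsOption (x.moveLeft i) x :=
  IsOption.moveLeft i

end PGame

end SetTheory

theorem misereP_iff (G : PGame) :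
    MisereP G ↔ Nonempty G.LeftMoves ∧ ∀ i, ¬ MisereP (G.moveLeft i) := by
  cases G
  exact Iff.rfl

theorem misereP_relabelling {x y : PGame} (r : Relabelling x y) : MisereP x ↔ MisereP y := by
  induction r with
  | mk L R hL hR ihL ihR =>
    rw [misereP_iff, misereP_iff]
    constructor
    · rintro ⟨hne, hall⟩
      refine ⟨hne.map L, fun j hj => hall (L.symm j) ?_⟩
      have h2 := ihL (L.symm j)
      rw [L.apply_symm_apply] at h2
      exact h2.mpr hj
    · rintro ⟨hne, hall⟩
      exact ⟨hne.map L.symm, fun i hi => hall (L i) ((ihL i).mp hi)⟩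

theorem misereP_add_left_empty : ∀ (H : PGame) {G : PGame},
    IsEmpty G.LeftMoves → (MisereP (G + H) ↔ MisereP H)
  | H, G, hG => by
    rw [misereP_iff, misereP_iff]
    constructor
    · rintro ⟨⟨i⟩, hall⟩
      rcases hi : toLeftMovesAdd.symm i with a | j
      · exact hG.elim a
      refine ⟨⟨j⟩, fun k hk => ?_⟩
      have := hall (toLeftMovesAdd (Sum.inr k))
      rw [add_moveLeft_inr] at this
      exact this ((misereP_add_left_empty (H.moveLeft k) hG).mpr hk)
    · rintro ⟨⟨j⟩, hall⟩
      refine ⟨⟨toLeftMovesAdd (Sum.inr j)⟩, fun i hi => ?_⟩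
      rw [← toLeftMovesAdd.apply_symm_apply i] at hi
      rcases hsym : toLeftMovesAdd.symm i with a | k
      · exact hG.elim a
      · rw [hsym, add_moveLeft_inr] at hi
        exact hall k ((misereP_add_left_empty (H.moveLeft k) hG).mp hi)
termination_by H => H
decreasing_by all_goals exact Subsequent.moveLeft _

/-- Let `𝒜` be a closed set of impartial games that is nonempty and contains at least
one game with an option (so `𝒜 ≠ ∅` and `𝒜` is not just the zero game).  Then for every
`G ∈ 𝒜` there exists `H ∈ 𝒜` such that `G + H` is a misère P-position. -/
theorem exists_misere_P_partner (A : Set PGame) (hImp : ∀ G ∈ A, G.Impartial)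
    (hA : IsClosedFamily A) (hne : A.Nonempty)
    (hnontriv : ∃ G ∈ A, Nonempty G.LeftMoves) :
    ∀ G ∈ A, ∃ H ∈ A, MisereP (G + H) := by
  -- First: A contains a misère P-position.
  have hP : ∃ H ∈ A, MisereP H := by
    obtain ⟨T, hT, hTl⟩ := hnontriv
    by_cases h : MisereP T
    · exact ⟨T, hT, h⟩
    · rw [misereP_iff] at h
      push_neg at h
      obtain ⟨i, hi⟩ := h hTl
      exact ⟨T.moveLeft i, hA.2.1 T hT i, hi⟩
  intro G hG
  by_cases hGl : Nonempty G.LeftMoves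
  · by_cases h : MisereP (G + G)
    · exact ⟨G, hG, h⟩
    · rw [misereP_iff] at h
      push_neg at h
      obtain ⟨i₀⟩ := hGl
      obtain ⟨i, hi⟩ := h ⟨toLeftMovesAdd (Sum.inl i₀)⟩
      rw [← toLeftMovesAdd.apply_symm_apply i] at hi
      rcases hsym : toLeftMovesAdd.symm i with a | a
      · rw [hsym, add_moveLeft_inl] at hi
        exact ⟨G.moveLeft a, hA.2.1 G hG a,
          (misereP_relabelling (addCommRelabelling _ _)).mp hi⟩
      · rw [hsym, add_moveLeft_inr] at hi
        exact ⟨G.moveLeft a, hA.2.1 G hG a, hi⟩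
  · rw [not_nonempty_iff] at hGl
    obtain ⟨H, hH, hHP⟩ := hP
    exact ⟨H, hH, (misereP_add_left_empty H hGl).mpr hHP⟩
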